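/- For θ₁, θ₂ ∈ (0,1) and integer n ≥ 1, the quantity λₙ(θ₁,θ₂) given by the Cardano formula λₙ = (1-θ₁)ⁿ(1-θ₂)ⁿ/3 + (Δ₁+√(Δ₁²-Δ₂³))^{1/3} + Δ₂/(Δ₁+√(Δ₁²-Δ₂³))^{1/3}, with Δ₁ = (1/6)(1-θ₁)^{2n}(1-θ₂)^{2n}[(θ₁/(1-θ₁))ⁿ + (θ₂/(1-θ₂))ⁿ] + (1/2)θ₁ⁿθ₂ⁿ + (1/27)(1-θ₁)^{3n}(1-θ₂)^{3n} and Δ₂ = (1/3)θ₁ⁿ(1-θ₂)ⁿ + (1/3)θ₂ⁿ(1-θ₁)ⁿ + (1/9)(1-θ₁)^{2n}(1-θ₂)^{2n}, is a root of the cubic λ³ = ((1-θ₁)ⁿλ + θ₁ⁿ)((1-θ₂)ⁿλ + θ₂ⁿ). -/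

import Mathlib

/-- The Cardano formula λₙ = (1-θ₁)ⁿ(1-θ₂)ⁿ/3 + C + Δ₂/C, with C a cube root of
Δ₁ + √(Δ₁² - Δ₂³), gives a root of the cubic λ³ = ((1-θ₁)ⁿλ+θ₁ⁿ)((1-θ₂)ⁿλ+θ₂ⁿ). -/
theorem stmt17 (θ₁ θ₂ : ℝ) (hθ₁ : θ₁ ∈ Set.Ioo (0:ℝ) 1) (hθ₂ : θ₂ ∈ Set.Ioo (0:ℝ) 1)
    (n : ℕ) (hn : 1 ≤ n)
    (Δ₁ Δ₂ : ℝ)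
    (hΔ₁ : Δ₁ = 1/6 * (1 - θ₁) ^ (2*n) * (1 - θ₂) ^ (2*n) *
        ((θ₁ / (1 - θ₁)) ^ n + (θ₂ / (1 - θ₂)) ^ n)
      + 1/2 * θ₁ ^ n * θ₂ ^ n + 1/27 * (1 - θ₁) ^ (3*n) * (1 - θ₂) ^ (3*n))
    (hΔ₂ : Δ₂ = 1/3 * θ₁ ^ n * (1 - θ₂) ^ n + 1/3 * θ₂ ^ n * (1 - θ₁) ^ n
      + 1/9 * (1 - θ₁) ^ (2*n) * (1 - θ₂) ^ (2*n))
    (s C lam : ℂ)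
    (hs : s ^ 2 = (Δ₁ : ℂ) ^ 2 - (Δ₂ : ℂ) ^ 3)
    (hC : C = ((Δ₁ : ℂ) + s) ^ ((1 : ℂ)/3))
    (hlam : lam = (((1 - θ₁) ^ n * (1 - θ₂) ^ n / 3 : ℝ) : ℂ) + C + (Δ₂ : ℂ) / C) :
    lam ^ 3 = ((((1 - θ₁) ^ n : ℝ) : ℂ) * lam + ((θ₁ ^ n : ℝ) : ℂ)) *
      ((((1 - θ₂) ^ n : ℝ) : ℂ) * lam + ((θ₂ ^ n : ℝ) : ℂ)) := by
  obtain ⟨h1, h2⟩ := hθ₁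
  obtain ⟨h3, h4⟩ := hθ₂
  have e1 : (0:ℝ) < 1 - θ₁ := by linarith
  have e2 : (0:ℝ) < 1 - θ₂ := by linarith
  have p2 : ∀ x : ℝ, x ^ (2*n) = (x ^ n) ^ 2 := fun x => by rw [mul_comm, pow_mul]
  have p3 : ∀ x : ℝ, x ^ (3*n) = (x ^ n) ^ 3 := fun x => by rw [mul_comm, pow_mul]
  set a : ℝ := (1 - θ₁) ^ n * (1 - θ₂) ^ n with ha
  set b : ℝ := θ₁ ^ n * (1 - θ₂) ^ n + θ₂ ^ n * (1 - θ₁) ^ n with hb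
  set c : ℝ := θ₁ ^ n * θ₂ ^ n with hc
  have hD1 : Δ₁ = 1/6 * a * b + 1/2 * c + 1/27 * a^3 := by
    rw [hΔ₁, ha, hb, hc]
    simp only [p2, p3, div_pow]
    field_simp
  have hD2 : Δ₂ = 1/3 * b + 1/9 * a^2 := by
    rw [hΔ₂, hb, ha]
    simp only [p2]
    ring
  have hΔ₂pos : (0:ℝ) < Δ₂ := by
    rw [hΔ₂]
    have q1 : (0:ℝ) < θ₁ ^ n * (1 - θ₂) ^ n := mul_pos (pow_pos h1 n) (pow_pos e2 n)
    have q2 : (0:ℝ) < θ₂ ^ n * (1 - θ₁) ^ n := mul_pos (pow_pos h3 n) (pow_pos e1 n)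
    have q3 : (0:ℝ) < (1 - θ₁) ^ (2*n) * (1 - θ₂) ^ (2*n) :=
      mul_pos (pow_pos e1 _) (pow_pos e2 _)
    linarith
  have hne : (Δ₁ : ℂ) + s ≠ 0 := by
    intro h
    have hs' : s = -(Δ₁ : ℂ) := by linear_combination h
    rw [hs'] at hs
    have h0 : (Δ₂ : ℂ) ^ 3 = 0 := by linear_combination hs
    have h0' : (Δ₂ : ℂ) = 0 := pow_eq_zero_iff (n := 3) (by norm_num) |>.mp h0
    exact absurd (by exact_mod_cast h0') (ne_of_gt hΔ₂pos)
  have hC3 : C ^ 3 = (Δ₁ : ℂ) + s := by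
    rw [hC]
    have h13 : (1:ℂ)/3 = ((3:ℕ):ℂ)⁻¹ := by norm_num
    rw [h13]
    exact Complex.cpow_nat_inv_pow _ (by norm_num)
  have hCne : C ≠ 0 := by
    intro h
    rw [h] at hC3
    simp at hC3
    exact hne hC3.symm
  have hC3ne : C ^ 3 ≠ 0 := pow_ne_zero 3 hCne
  have hinv : (Δ₂ : ℂ) ^ 3 = C ^ 3 * ((Δ₁ : ℂ) - s) := by
    rw [hC3]; linear_combination hs
  obtain ⟨t, ht⟩ : ∃ t : ℂ, t = C + (Δ₂ : ℂ) / C := ⟨_, rfl⟩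
  have htc : t * C = C ^ 2 + (Δ₂ : ℂ) := by
    rw [ht]; field_simp
  have key2 : t ^ 3 * C ^ 3 = (2 * (Δ₁ : ℂ) + 3 * (Δ₂ : ℂ) * t) * C ^ 3 := by
    have e : t ^ 3 * C ^ 3 = (t * C) ^ 3 := by ring
    rw [e, htc]
    linear_combination C^3 * hC3 + hinv - (3 * (Δ₂:ℂ) * C^2) * htc
  have ht3 : t ^ 3 = 2 * (Δ₁ : ℂ) + 3 * (Δ₂ : ℂ) * t :=
    mul_right_cancel₀ hC3ne key2
  have hlam' : lam = ((a : ℝ) : ℂ) / 3 + t := by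
    rw [hlam, ht, ha]
    push_cast
    ring
  have hD1' : (Δ₁ : ℂ) = 1/6 * a * b + 1/2 * c + 1/27 * (a:ℂ)^3 := by
    rw [hD1]; push_cast; ring
  have hD2' : (Δ₂ : ℂ) = 1/3 * b + 1/9 * (a:ℂ)^2 := by
    rw [hD2]; push_cast; ring
  have key : lam ^ 3 = (a : ℂ) * lam ^ 2 + (b : ℂ) * lam + (c : ℂ) := by
    rw [hlam']
    linear_combination ht3 + 2*hD1' + (3*t)*hD2'
  rw [key]
  push_cast [ha, hb, hc]
  ring
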